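/- arXiv:1412.5302 — 2 statements merged into one kernel-verified Lean document; each statement's English description precedes it below -/
import Mathlib

section
/- The set of saturated two-layer networks is a complete set of filters: if there exists a sorting network on n channels of depth d ≥ 2, then there exists a sorting network on n channels of depth d whose first two layers form a saturated two-layer comparator network. -/
namespace SN

open scoped Classical

/-- A comparator on `n` channels: a pair of channels. -/
abbrev Comp (n : ℕ) := Fin n × Fin n

/-- A layer is a finite set of comparators. -/
abbrev Layer (n : ℕ) := Finset (Comp n)

/-- A comparator network is a sequence (list) of layers; its depth is the length. -/
abbrev Net (n : ℕ) := List (Layer n)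

/-- Each channel is used by at most one comparator of the layer. -/
def NoOverlap {n : ℕ} (L : Layer n) : Prop :=
  ∀ c ∈ L, ∀ c' ∈ L, c ≠ c' →
    c.1 ≠ c'.1 ∧ c.1 ≠ c'.2 ∧ c.2 ≠ c'.1 ∧ c.2 ≠ c'.2

/-- A (standard) layer: comparators `(i,j)` with `i < j`, channels pairwise disjoint. -/
def IsLayer {n : ℕ} (L : Layer n) : Prop :=
  (∀ c ∈ L, c.1 < c.2) ∧ NoOverlap L

/-- A generalized layer: comparators `(i,j)` with `i ≠ j` allowed in any order. -/
def IsGenLayer {n : ℕ} (L : Layer n) : Prop :=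
  (∀ c ∈ L, c.1 ≠ c.2) ∧ NoOverlap L

def IsNet {n : ℕ} (C : Net n) : Prop := ∀ L ∈ C, IsLayer L

def IsGenNet {n : ℕ} (C : Net n) : Prop := ∀ L ∈ C, IsGenLayer L

/-- Apply one layer to a Boolean vector: a comparator `(i,j)` puts the min
(`&&`) on channel `i` and the max (`||`) on channel `j`. -/
noncomputable def applyLayer {n : ℕ} (L : Layer n) (x : Fin n → Bool) : Fin n → Bool :=
  fun k =>
    if h1 : ∃ c ∈ L, c.1 = k then x h1.choose.1 && x h1.choose.2
    else if h2 : ∃ c ∈ L, c.2 = k then x h2.choose.1 || x h2.choose.2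
    else x k

/-- Run a comparator network on a Boolean input (layers applied in sequence). -/
noncomputable def run {n : ℕ} (C : Net n) (x : Fin n → Bool) : Fin n → Bool :=
  C.foldl (fun y L => applyLayer L y) x

/-- Ascendingly sorted Boolean vector. -/
def BSorted {n : ℕ} (x : Fin n → Bool) : Prop :=
  ∀ i j : Fin n, i ≤ j → x i ≤ x j

/-- A sorting network: a comparator network sorting every Boolean input. -/
def IsSortingNet {n : ℕ} (C : Net n) : Prop :=
  IsNet C ∧ ∀ x : Fin n → Bool, BSorted (run C x)

/-- The set of outputs of a network on all Boolean inputs. -/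
def outputs {n : ℕ} (C : Net n) : Set (Fin n → Bool) := Set.range (run C)

/-- Apply one layer to a vector of naturals. -/
noncomputable def applyLayerN {n : ℕ} (L : Layer n) (x : Fin n → ℕ) : Fin n → ℕ :=
  fun k =>
    if h1 : ∃ c ∈ L, c.1 = k then min (x h1.choose.1) (x h1.choose.2)
    else if h2 : ∃ c ∈ L, c.2 = k then max (x h2.choose.1) (x h2.choose.2)
    else x k

noncomputable def runN {n : ℕ} (C : Net n) (x : Fin n → ℕ) : Fin n → ℕ :=
  C.foldl (fun y L => applyLayerN L y) x

def NSorted {n : ℕ} (x : Fin n → ℕ) : Prop :=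
  ∀ i j : Fin n, i ≤ j → x i ≤ x j

/-- Permute the coordinates of a Boolean vector by `π` (channel `k`'s value
moves to channel `π k`). -/
def permVec {n : ℕ} (π : Equiv.Perm (Fin n)) (x : Fin n → Bool) : Fin n → Bool :=
  fun i => x (π.symm i)

/-- The image of a set of Boolean vectors under coordinate permutation by `π`. -/
def permSet {n : ℕ} (π : Equiv.Perm (Fin n)) (X : Set (Fin n → Bool)) :
    Set (Fin n → Bool) :=
  permVec π '' X

/-- The image `π(L)` of a layer under a permutation of channels. -/
def permLayer {n : ℕ} (π : Equiv.Perm (Fin n)) (L : Layer n) : Layer n :=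
  L.image fun c => (π c.1, π c.2)

/-- Channel `i` is used by some comparator of the layer `L`. -/
def usedIn {n : ℕ} (L : Layer n) (i : Fin n) : Prop := ∃ c ∈ L, c.1 = i ∨ c.2 = i

/-- Channels `i` and `j` are joined by a comparator of `L`. -/
def Joined {n : ℕ} (L : Layer n) (i j : Fin n) : Prop := (i, j) ∈ L ∨ (j, i) ∈ L

/-- `i` is the smaller channel of some comparator of `L` (a min-channel). -/
def MinChan {n : ℕ} (L : Layer n) (i : Fin n) : Prop := ∃ c ∈ L, c.1 = i

/-- `i` is the larger channel of some comparator of `L` (a max-channel). -/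
def MaxChan {n : ℕ} (L : Layer n) (i : Fin n) : Prop := ∃ c ∈ L, c.2 = i

/-- A two-layer network `[L1, L2]` is redundant if some comparator can be removed
so that the outputs of the result are a permutation of the original outputs. -/
def Redundant {n : ℕ} (L1 L2 : Layer n) : Prop :=
  ∃ π : Equiv.Perm (Fin n),
    (∃ c ∈ L1, outputs [L1.erase c, L2] = permSet π (outputs [L1, L2])) ∨
    (∃ c ∈ L2, outputs [L1, L2.erase c] = permSet π (outputs [L1, L2]))

/-- A two-layer network `[L1, L2]` is saturated if it is non-redundant and no
comparator on two channels unused in the second layer can be added to the second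
layer so as to make the output set a proper subset of a permutation of the
original output set. -/
def Saturated {n : ℕ} (L1 L2 : Layer n) : Prop :=
  ¬ Redundant L1 L2 ∧
  ¬ ∃ (c : Comp n) (π : Equiv.Perm (Fin n)),
      c.1 < c.2 ∧ ¬ usedIn L2 c.1 ∧ ¬ usedIn L2 c.2 ∧
      outputs [L1, insert c L2] ⊂ permSet π (outputs [L1, L2])

/-- Vertices of the graph representation of `C`: the comparators of `C`,
tagged with the index of the layer containing them. -/
def Vertex {n : ℕ} (C : Net n) := {p : ℕ × Comp n // p.2 ∈ C.getD p.1 ∅}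

/-- The channel carrying the min output (`b = false`, label 1) or max output
(`b = true`, label 2) of a comparator. -/
def outChan {n : ℕ} (c : Comp n) (b : Bool) : Fin n := if b then c.2 else c.1

/-- An edge with label `b` (1 for min, 2 for max) from comparator `u` to
comparator `v`: the corresponding output of `u` is an input of `v`, i.e. `v`
is the next comparator on that channel. -/
def Edge {n : ℕ} (C : Net n) (b : Bool) (u v : ℕ × Comp n) : Prop :=
  u.1 < v.1 ∧ (outChan u.2 b = v.2.1 ∨ outChan u.2 b = v.2.2) ∧
  ∀ m, u.1 < m → m < v.1 → ¬ usedIn (C.getD m ∅) (outChan u.2 b)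

/-- The graph representations of `C` and `D` are isomorphic: a bijection of
comparators preserving the labeled edges. -/
def GraphIso {n m : ℕ} (C : Net n) (D : Net m) : Prop :=
  ∃ f : Vertex C ≃ Vertex D,
    ∀ (b : Bool) (u v : Vertex C),
      Edge C b u.val v.val ↔ Edge D b (f u).val (f v).val

/-- The graph representation of `C` is connected. -/
def GraphConnected {n : ℕ} (C : Net n) : Prop :=
  ∀ u v : Vertex C,
    Relation.ReflTransGen
      (fun a b : Vertex C => ∃ ℓ : Bool, Edge C ℓ a.val b.val ∨ Edge C ℓ b.val a.val) u v

/-- Reflection of a comparator: `(i,j) ↦ (n-j+1, n-i+1)` (in 1-based terms). -/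
def reflectComp {n : ℕ} (c : Comp n) : Comp n := (c.2.rev, c.1.rev)

def reflectLayer {n : ℕ} (L : Layer n) : Layer n := L.image reflectComp

/-- Reflection `C^R` of a comparator network. -/
def reflect {n : ℕ} (C : Net n) : Net n := C.map reflectLayer

/-- The first layer `F_n = {(2i-1, 2i) : 1 ≤ i ≤ ⌊n/2⌋}` (0-indexed: `(2i, 2i+1)`). -/
def FLayer (n : ℕ) : Layer n :=
  Finset.univ.filter fun c : Comp n => c.1.val % 2 = 0 ∧ c.2.val = c.1.val + 1

/-- The two-layer networks with first layer `F_n`, parametrized by second layer. -/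
def SecondLayers (n : ℕ) := {L : Layer n // IsLayer L}

/-- The number `|R(G_n)|` of equivalence classes of two-layer networks with
first layer `F_n`, under graph isomorphism `≈`. -/
noncomputable def numClasses (n : ℕ) : ℕ :=
  Nat.card (Quot fun L L' : SecondLayers n =>
    GraphIso ([FLayer n, L.val] : Net n) ([FLayer n, L'.val] : Net n))

/-- Redundant two-layer networks with first layer `F_n`. -/
def RedLayers (n : ℕ) := {L : Layer n // IsLayer L ∧ Redundant (FLayer n) L}

/-- The number of equivalence classes of redundant two-layer networks with
first layer `F_n`, under graph isomorphism `≈`. -/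
noncomputable def numRedClasses (n : ℕ) : ℕ :=
  Nat.card (Quot fun L L' : RedLayers n =>
    GraphIso ([FLayer n, L.val] : Net n) ([FLayer n, L'.val] : Net n))


variable {n : ℕ}

lemma noOverlap_eq {L : Layer n} (h : NoOverlap L) {c c' : Comp n}
    (hc : c ∈ L) (hc' : c' ∈ L)
    (hch : c.1 = c'.1 ∨ c.1 = c'.2 ∨ c.2 = c'.1 ∨ c.2 = c'.2) : c = c' := by
  by_contra hne
  obtain ⟨h1, h2, h3, h4⟩ := h c hc c' hc' hne
  tauto

lemma applyLayer_fst {L : Layer n} (hL : IsGenLayer L) {i j : Fin n}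
    (hij : (i, j) ∈ L) (x : Fin n → Bool) :
    applyLayer L x i = (x i && x j) := by
  have h1 : ∃ c ∈ L, c.1 = i := ⟨(i, j), hij, rfl⟩
  have hc : h1.choose = (i, j) := by
    obtain ⟨hmem, hfst⟩ := h1.choose_spec
    exact noOverlap_eq hL.2 hmem hij (Or.inl hfst)
  simp only [applyLayer]
  rw [dif_pos h1, hc]

lemma applyLayer_snd {L : Layer n} (hL : IsGenLayer L) {i j : Fin n}
    (hij : (i, j) ∈ L) (x : Fin n → Bool) :
    applyLayer L x j = (x i || x j) := by
  have hne : i ≠ j := hL.1 _ hij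
  have hno : ¬ ∃ c ∈ L, c.1 = j := by
    rintro ⟨c, hmem, hfst⟩
    have : c = (i, j) := noOverlap_eq hL.2 hmem hij (Or.inr (Or.inl hfst))
    rw [this] at hfst
    exact hne hfst
  have h2 : ∃ c ∈ L, c.2 = j := ⟨(i, j), hij, rfl⟩
  have hc : h2.choose = (i, j) := by
    obtain ⟨hmem, hsnd⟩ := h2.choose_spec
    exact noOverlap_eq hL.2 hmem hij (Or.inr (Or.inr (Or.inr hsnd)))
  simp only [applyLayer]
  rw [dif_neg hno, dif_pos h2, hc]

lemma applyLayer_not_used {L : Layer n} {k : Fin n} (h : ¬ usedIn L k)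
    (x : Fin n → Bool) : applyLayer L x k = x k := by
  have h1 : ¬ ∃ c ∈ L, c.1 = k := fun ⟨c, hm, he⟩ => h ⟨c, hm, Or.inl he⟩
  have h2 : ¬ ∃ c ∈ L, c.2 = k := fun ⟨c, hm, he⟩ => h ⟨c, hm, Or.inr he⟩
  simp only [applyLayer]
  rw [dif_neg h1, dif_neg h2]


variable {n : ℕ}

lemma permVec_permVec (σ ρ : Equiv.Perm (Fin n)) (x : Fin n → Bool) :
    permVec σ (permVec ρ x) = permVec (σ * ρ) x := by
  funext i
  simp [permVec, Equiv.Perm.mul_def]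

lemma permVec_injective (σ : Equiv.Perm (Fin n)) :
    Function.Injective (permVec σ (n := n)) := by
  intro a b h
  funext i
  have := congrFun h (σ i)
  simpa [permVec] using this

lemma permVec_one (x : Fin n → Bool) : permVec 1 x = x := by
  funext i; simp [permVec]; rfl

lemma IsGenLayer.perm {L : Layer n} (hL : IsGenLayer L) (σ : Equiv.Perm (Fin n)) :
    IsGenLayer (permLayer σ L) := by
  constructor
  · rintro c hc
    simp only [permLayer, Finset.mem_image] at hc
    obtain ⟨d, hd, rfl⟩ := hc
    simpa using fun h => hL.1 d hd (σ.injective h)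
  · rintro c hc c' hc' hne
    simp only [permLayer, Finset.mem_image] at hc hc'
    obtain ⟨d, hd, rfl⟩ := hc
    obtain ⟨d', hd', rfl⟩ := hc'
    have hdd : d ≠ d' := by rintro rfl; exact hne rfl
    obtain ⟨h1, h2, h3, h4⟩ := hL.2 d hd d' hd' hdd
    refine ⟨?_, ?_, ?_, ?_⟩ <;> simp [h1, h2, h3, h4]

lemma usedIn_permLayer {L : Layer n} {σ : Equiv.Perm (Fin n)} {k : Fin n} :
    usedIn (permLayer σ L) (σ k) ↔ usedIn L k := by
  constructor
  · rintro ⟨c, hc, h⟩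
    simp only [permLayer, Finset.mem_image] at hc
    obtain ⟨d, hd, rfl⟩ := hc
    rcases h with h | h
    · exact ⟨d, hd, Or.inl (σ.injective h)⟩
    · exact ⟨d, hd, Or.inr (σ.injective h)⟩
  · rintro ⟨c, hc, h⟩
    refine ⟨(σ c.1, σ c.2), Finset.mem_image_of_mem _ hc, ?_⟩
    rcases h with h | h
    · exact Or.inl (by rw [h])
    · exact Or.inr (by rw [h])

lemma applyLayer_perm {L : Layer n} (hL : IsGenLayer L) (σ : Equiv.Perm (Fin n))
    (x : Fin n → Bool) :
    applyLayer (permLayer σ L) (permVec σ x) = permVec σ (applyLayer L x) := by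
  have hL' := hL.perm σ
  funext i
  obtain ⟨k, rfl⟩ : ∃ k, i = σ k := ⟨σ.symm i, by simp⟩
  have hrhs : permVec σ (applyLayer L x) (σ k) = applyLayer L x k := by
    simp [permVec]
  by_cases h1 : ∃ c ∈ L, c.1 = k
  · obtain ⟨c, hc, rfl⟩ := h1
    have hmem : (σ c.1, σ c.2) ∈ permLayer σ L := Finset.mem_image_of_mem _ hc
    rw [hrhs, applyLayer_fst hL' hmem, applyLayer_fst hL (by exact hc)]
    simp [permVec]
  · by_cases h2 : ∃ c ∈ L, c.2 = k
    · obtain ⟨c, hc, rfl⟩ := h2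
      have hmem : (σ c.1, σ c.2) ∈ permLayer σ L := Finset.mem_image_of_mem _ hc
      rw [hrhs, applyLayer_snd hL' hmem, applyLayer_snd hL (by exact hc)]
      simp [permVec]
    · have hu : ¬ usedIn L k := by
        rintro ⟨c, hc, h | h⟩
        exacts [h1 ⟨c, hc, h⟩, h2 ⟨c, hc, h⟩]
      have hu' : ¬ usedIn (permLayer σ L) (σ k) := fun h => hu (usedIn_permLayer.mp h)
      rw [hrhs, applyLayer_not_used hu', applyLayer_not_used hu]
      simp [permVec]

lemma run_cons (L : Layer n) (C : Net n) (x : Fin n → Bool) :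
    run (L :: C) x = run C (applyLayer L x) := rfl

lemma run_map_perm {C : Net n} (hC : IsGenNet C) (σ : Equiv.Perm (Fin n))
    (x : Fin n → Bool) :
    run (C.map (permLayer σ)) (permVec σ x) = permVec σ (run C x) := by
  induction C generalizing x with
  | nil => rfl
  | cons L rest ih =>
    have hL : IsGenLayer L := hC L (by simp)
    have hrest : IsGenNet rest := fun M hM => hC M (by simp [hM])
    rw [List.map_cons, run_cons, run_cons, applyLayer_perm hL, ih hrest]

lemma IsLayer.toGen {L : Layer n} (hL : IsLayer L) : IsGenLayer L :=
  ⟨fun c hc => ne_of_lt (hL.1 c hc), hL.2⟩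

lemma applyLayer_sorted {L : Layer n} (hL : IsLayer L) {x : Fin n → Bool}
    (hx : BSorted x) : applyLayer L x = x := by
  funext k
  by_cases h1 : ∃ c ∈ L, c.1 = k
  · obtain ⟨c, hc, rfl⟩ := h1
    rw [applyLayer_fst hL.toGen (show (c.1, c.2) ∈ L by simpa using hc)]
    have hle : x c.1 ≤ x c.2 := hx _ _ (le_of_lt (hL.1 c hc))
    revert hle; cases hxi : x c.1 <;> cases hxj : x c.2 <;> simp
  · by_cases h2 : ∃ c ∈ L, c.2 = k
    · obtain ⟨c, hc, rfl⟩ := h2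
      rw [applyLayer_snd hL.toGen (show (c.1, c.2) ∈ L by simpa using hc)]
      have hle : x c.1 ≤ x c.2 := hx _ _ (le_of_lt (hL.1 c hc))
      revert hle; cases hxi : x c.1 <;> cases hxj : x c.2 <;> simp
    · exact applyLayer_not_used (fun ⟨c, hc, h⟩ => h.elim
        (fun h => h1 ⟨c, hc, h⟩) (fun h => h2 ⟨c, hc, h⟩)) x

lemma run_sorted {C : Net n} (hC : IsNet C) {x : Fin n → Bool}
    (hx : BSorted x) : run C x = x := by
  induction C with
  | nil => rfl
  | cons L rest ih =>
    rw [run_cons, applyLayer_sorted (hC L (by simp)) hx]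
    exact ih (fun M hM => hC M (by simp [hM]))

/-- Number of `true` entries. -/
noncomputable def wt (x : Fin n → Bool) : ℕ :=
  (Finset.univ.filter fun i => x i = true).card

lemma wt_permVec (σ : Equiv.Perm (Fin n)) (x : Fin n → Bool) :
    wt (permVec σ x) = wt x := by
  unfold wt
  apply Finset.card_bij' (fun i _ => σ.symm i) (fun i _ => σ i)
  · intro i hi; simpa [permVec] using (Finset.mem_filter.mp hi).2
  · intro i hi; simp only [Finset.mem_filter, Finset.mem_univ, true_and] at hi ⊢; simpa [permVec] using hi
  · intro i _; simp
  · intro i _; simp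

lemma BSorted.eq_of_wt {a b : Fin n → Bool} (ha : BSorted a) (hb : BSorted b)
    (h : wt a = wt b) : a = b := by
  by_contra hne
  have key : ∀ u v : Fin n → Bool, BSorted u → BSorted v → ∀ i : Fin n,
      u i = true → v i = false → wt v < wt u := by
    intro u v hu hv i hui hvi
    have hsub1 : Finset.Ici i ⊆ Finset.univ.filter fun j => u j = true := by
      intro j hj
      simp only [Finset.mem_filter, Finset.mem_univ, true_and]
      have := hu i j (Finset.mem_Ici.mp hj)
      rw [hui] at this
      cases huj : u j
      · rw [huj] at this; exact absurd this (by simp)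
      · rfl
    have hsub2 : (Finset.univ.filter fun j => v j = true) ⊆ Finset.Ioi i := by
      intro j hj
      simp only [Finset.mem_filter, Finset.mem_univ, true_and] at hj
      rcases lt_or_ge i j with hlt | hle
      · exact Finset.mem_Ioi.mpr hlt
      · exact absurd (hv j i hle) (by simp [hj, hvi])
    calc wt v ≤ (Finset.Ioi i).card := Finset.card_le_card hsub2
      _ < (Finset.Ici i).card := Finset.card_lt_card
          ⟨Finset.Ioi_subset_Ici_self, fun hs =>
            by simpa using (Finset.mem_Ioi.mp (hs (Finset.mem_Ici.mpr le_rfl)))⟩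
      _ ≤ wt u := Finset.card_le_card hsub1
  obtain ⟨i, hi⟩ : ∃ i, a i ≠ b i := by
    by_contra hall; push_neg at hall; exact hne (funext hall)
  cases hai : a i
  · have hbi : b i = true := by
      cases hbi : b i
      · rw [hai, hbi] at hi; simp at hi
      · rfl
    exact absurd h (ne_of_lt (key b a hb ha i hbi hai))
  · have hbi : b i = false := by
      cases hbi : b i
      · rfl
      · rw [hai, hbi] at hi; simp at hi
    exact absurd h (ne_of_gt (key a b ha hb i hai hbi))

lemma layer_standardize_aux :
    ∀ (m : ℕ) (L : Layer n), (L.filter fun c => ¬ c.1 < c.2).card = m →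
      IsGenLayer L → ∃ (M : Layer n) (σ : Equiv.Perm (Fin n)), IsLayer M ∧
        ∀ x, applyLayer M x = permVec σ (applyLayer L x) := by
  intro m
  induction m using Nat.strong_induction_on with
  | _ m IH =>
    intro L hcard hL
    rcases Nat.eq_zero_or_pos m with rfl | hm
    · refine ⟨L, 1, ⟨?_, hL.2⟩, fun x => by rw [permVec_one]⟩
      intro c hc
      by_contra hlt
      have : c ∈ L.filter fun c => ¬ c.1 < c.2 := Finset.mem_filter.mpr ⟨hc, hlt⟩
      rw [Finset.card_eq_zero.mp hcard] at this
      simp at this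
    · -- pick a bad comparator
      have hne : (L.filter fun c => ¬ c.1 < c.2).Nonempty := by
        rw [← Finset.card_pos, hcard]; exact hm
      obtain ⟨c, hcf⟩ := hne
      obtain ⟨hcL, hbad⟩ := Finset.mem_filter.mp hcf
      obtain ⟨a, b⟩ := c
      simp only at hbad
      have hab : a ≠ b := hL.1 _ hcL
      have hba : b < a := (lt_or_gt_of_ne hab).resolve_left hbad
      set L' : Layer n := insert (b, a) (L.erase (a, b)) with hL'def
      have hmem' : ((b, a) : Comp n) ∈ L' := Finset.mem_insert_self _ _
      have hmemL' : ∀ c' : Comp n, c' ∈ L' ↔ c' = (b, a) ∨ (c' ∈ L ∧ c' ≠ (a, b)) := by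
        intro c'
        simp only [hL'def, Finset.mem_insert, Finset.mem_erase]
        tauto
      have hL' : IsGenLayer L' := by
        constructor
        · intro c' hc'
          rcases (hmemL' c').mp hc' with rfl | ⟨hmem, _⟩
          · exact hab.symm
          · exact hL.1 _ hmem
        · intro c1 h1 c2 h2 hne12
          rcases (hmemL' c1).mp h1 with rfl | ⟨hm1, hne1⟩ <;>
            rcases (hmemL' c2).mp h2 with rfl | ⟨hm2, hne2⟩
          · exact absurd rfl hne12
          · obtain ⟨q1, q2, q3, q4⟩ := hL.2 (a, b) hcL c2 hm2 (Ne.symm hne2)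
            exact ⟨q3, q4, q1, q2⟩
          · obtain ⟨q1, q2, q3, q4⟩ := hL.2 (a, b) hcL c1 hm1 (Ne.symm hne1)
            exact ⟨q3.symm, q1.symm, q4.symm, q2.symm⟩
          · exact hL.2 c1 hm1 c2 hm2 hne12
      have happly : ∀ x, applyLayer L' x = permVec (Equiv.swap a b) (applyLayer L x) := by
        intro x
        funext k
        have hpv : permVec (Equiv.swap a b) (applyLayer L x) k
            = applyLayer L x (Equiv.swap a b k) := by
          simp [permVec, Equiv.symm_swap]
        rw [hpv]
        rcases eq_or_ne k a with rfl | hka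
        · rw [Equiv.swap_apply_left, applyLayer_snd hL' hmem',
            applyLayer_snd hL hcL, Bool.or_comm]
        · rcases eq_or_ne k b with rfl | hkb
          · rw [Equiv.swap_apply_right, applyLayer_fst hL' hmem',
              applyLayer_fst hL hcL, Bool.and_comm]
          · rw [Equiv.swap_apply_of_ne_of_ne hka hkb]
            by_cases h1 : ∃ c' ∈ L, c'.1 = k
            · obtain ⟨⟨i, j⟩, hm1, hfst⟩ := h1
              simp only at hfst
              subst hfst
              have hmm : ((i, j) : Comp n) ∈ L' := (hmemL' _).mpr
                (Or.inr ⟨hm1, fun h => hka (congrArg Prod.fst h)⟩)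
              rw [applyLayer_fst hL' hmm, applyLayer_fst hL hm1]
            · by_cases h2 : ∃ c' ∈ L, c'.2 = k
              · obtain ⟨⟨i, j⟩, hm2, hsnd⟩ := h2
                simp only at hsnd
                subst hsnd
                have hmm : ((i, j) : Comp n) ∈ L' := (hmemL' _).mpr
                  (Or.inr ⟨hm2, fun h => hkb (congrArg Prod.snd h)⟩)
                rw [applyLayer_snd hL' hmm, applyLayer_snd hL hm2]
              · have hu : ¬ usedIn L k := by
                  rintro ⟨c', hc', h | h⟩
                  exacts [h1 ⟨c', hc', h⟩, h2 ⟨c', hc', h⟩]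
                have hu' : ¬ usedIn L' k := by
                  rintro ⟨c', hc', hor⟩
                  rcases (hmemL' c').mp hc' with rfl | ⟨hmc, _⟩
                  · rcases hor with h | h
                    · exact hkb h.symm
                    · exact hka h.symm
                  · exact hu ⟨c', hmc, hor⟩
                rw [applyLayer_not_used hu', applyLayer_not_used hu]
      -- the bad-comparator count decreases
      have hsub : L'.filter (fun c => ¬ c.1 < c.2)
          ⊆ (L.filter fun c => ¬ c.1 < c.2).erase (a, b) := by
        intro c' hc'
        obtain ⟨hmL', hP⟩ := Finset.mem_filter.mp hc'
        rcases (hmemL' c').mp hmL' with rfl | ⟨hmL, hne'⟩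
        · exact absurd hba hP
        · exact Finset.mem_erase.mpr ⟨hne', Finset.mem_filter.mpr ⟨hmL, hP⟩⟩
      have hlt : (L'.filter fun c => ¬ c.1 < c.2).card < m := by
        calc (L'.filter fun c => ¬ c.1 < c.2).card
            ≤ ((L.filter fun c => ¬ c.1 < c.2).erase (a, b)).card :=
              Finset.card_le_card hsub
          _ < (L.filter fun c => ¬ c.1 < c.2).card :=
              Finset.card_erase_lt_of_mem hcf
          _ = m := hcard
      obtain ⟨M, σ, hM, hspec⟩ := IH _ hlt L' rfl hL'
      exact ⟨M, σ * Equiv.swap a b, hM, fun x => by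
        rw [hspec x, happly x, permVec_permVec]⟩

lemma layer_standardize {L : Layer n} (hL : IsGenLayer L) :
    ∃ (M : Layer n) (σ : Equiv.Perm (Fin n)), IsLayer M ∧
      ∀ x, applyLayer M x = permVec σ (applyLayer L x) :=
  layer_standardize_aux _ L rfl hL

lemma net_standardize : ∀ (m : ℕ) (N : Net n), N.length = m → IsGenNet N →
    ∃ (N' : Net n) (σ : Equiv.Perm (Fin n)), IsNet N' ∧ N'.length = N.length ∧
      ∀ x, run N' x = permVec σ (run N x) := by
  intro m
  induction m using Nat.strong_induction_on with
  | _ m IH =>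
    intro N hlen hgen
    match N with
    | [] =>
      exact ⟨[], 1, fun L hL => absurd hL (by simp), rfl,
        fun x => (permVec_one _).symm⟩
    | L :: rest =>
      have hLgen : IsGenLayer L := hgen L (by simp)
      have hrest : IsGenNet rest := fun M hM => hgen M (by simp [hM])
      obtain ⟨M, σ₁, hM, hMspec⟩ := layer_standardize hLgen
      set rest₁ : Net n := rest.map (permLayer σ₁) with hrest₁def
      have hrest₁gen : IsGenNet rest₁ := by
        intro P hP
        simp only [hrest₁def, List.mem_map] at hP
        obtain ⟨Q, hQ, rfl⟩ := hP
        exact (hrest Q hQ).perm σ₁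
      have hlen₁ : rest₁.length = rest.length := List.length_map _
      have hlenm : rest.length + 1 = m := by simpa using hlen
      have hlt : rest₁.length < m := by
        rw [hlen₁]; omega
      obtain ⟨N₂, σ₂, hN₂, hlen₂, hspec₂⟩ := IH _ hlt rest₁ rfl hrest₁gen
      refine ⟨M :: N₂, σ₂ * σ₁, ?_, ?_, ?_⟩
      · intro P hP
        rcases List.mem_cons.mp hP with rfl | hP
        · exact hM
        · exact hN₂ P hP
      · simp [hlen₂, hlen₁]
      · intro x
        rw [run_cons, run_cons, hMspec x, hspec₂, run_map_perm hrest,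
          permVec_permVec]

lemma replace_prefix {L1 L2 : Layer n} {rest : Net n}
    (hS : IsSortingNet (L1 :: L2 :: rest))
    {L1' L2' : Layer n} (hL1' : IsLayer L1') (hL2' : IsLayer L2')
    {π : Equiv.Perm (Fin n)}
    (hsub : outputs [L1', L2'] ⊆ permSet π (outputs [L1, L2])) :
    ∃ rest' : Net n, rest'.length = rest.length ∧
      IsSortingNet (L1' :: L2' :: rest') := by
  obtain ⟨hnet, hsort⟩ := hS
  have hrestnet : IsNet rest := fun M hM => hnet M (by simp [hM])
  have hrestgen : IsGenNet rest := fun M hM => (hrestnet M hM).toGen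
  set G : Net n := rest.map (permLayer π) with hGdef
  have hGgen : IsGenNet G := by
    intro P hP
    simp only [hGdef, List.mem_map] at hP
    obtain ⟨Q, hQ, rfl⟩ := hP
    exact (hrestgen Q hQ).perm π
  obtain ⟨rest', σ, hrest'net, hlen', hrun'⟩ := net_standardize G.length G rfl hGgen
  have hlen : rest'.length = rest.length := by rw [hlen', hGdef]; simp
  refine ⟨rest', hlen, ⟨?_, ?_⟩⟩
  · intro P hP
    rcases List.mem_cons.mp hP with rfl | hP
    · exact hL1'
    rcases List.mem_cons.mp hP with rfl | hP
    · exact hL2'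
    · exact hrest'net P hP
  · have claim1 : ∀ z ∈ outputs [L1', L2'], ∃ s, BSorted s ∧
        run rest' z = permVec (σ * π) s := by
      intro z hz
      obtain ⟨y, hy, hzy⟩ := hsub hz
      obtain ⟨w, hw⟩ := hy
      refine ⟨run rest y, ?_, ?_⟩
      · have h2 : run (L1 :: L2 :: rest) w = run rest y := by rw [← hw]; rfl
        rw [← h2]; exact hsort w
      · rw [← hzy, hrun', hGdef, run_map_perm hrestgen, permVec_permVec]
    have claim2 : ∀ v, BSorted v → permVec (σ * π) v = v := by
      intro v hv
      have hzv : run [L1', L2'] v = v := by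
        show applyLayer L2' (applyLayer L1' v) = v
        rw [applyLayer_sorted hL1' hv, applyLayer_sorted hL2' hv]
      obtain ⟨s, hs, heq⟩ := claim1 v ⟨v, hzv⟩
      rw [run_sorted hrest'net hv] at heq
      have hwt : wt s = wt v := by rw [heq, wt_permVec]
      have hsv : s = v := hs.eq_of_wt hv hwt
      subst hsv
      exact heq.symm
    intro x
    have hx : run (L1' :: L2' :: rest') x = run rest' (run [L1', L2'] x) := rfl
    obtain ⟨s, hs, heq⟩ := claim1 (run [L1', L2'] x) ⟨x, rfl⟩
    rw [hx, heq, claim2 s hs]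
    exact hs

lemma IsLayer.subset {L L' : Layer n} (h : L' ⊆ L) (hL : IsLayer L) : IsLayer L' :=
  ⟨fun c hc => hL.1 c (h hc), fun c hc c' hc' hne => hL.2 c (h hc) c' (h hc') hne⟩

lemma IsLayer.card_le {L : Layer n} (hL : IsLayer L) : L.card ≤ n := by
  have hinj : Set.InjOn Prod.fst (L : Set (Comp n)) := by
    intro c hc c' hc' hfst
    by_contra hne
    exact (hL.2 c hc c' hc' hne).1 hfst
  calc L.card = (L.image Prod.fst).card := (Finset.card_image_of_injOn hinj).symm
    _ ≤ (Finset.univ : Finset (Fin n)).card := Finset.card_le_card (Finset.subset_univ _)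
    _ = n := by simp

lemma ncard_permSet (π : Equiv.Perm (Fin n)) (X : Set (Fin n → Bool)) :
    (permSet π X).ncard = X.ncard :=
  Set.ncard_image_of_injective X (permVec_injective π)


/-- saturated two-layer networks form a complete set of filters:
if there is a sorting network on n channels of depth d ≥ 2, then there is one
of depth d whose first two layers form a saturated two-layer network. -/
theorem saturated_complete_filters {n d : ℕ} (hd : 2 ≤ d)
    (h : ∃ C : Net n, C.length = d ∧ IsSortingNet C) :
    ∃ (L1 L2 : Layer n) (rest : Net n),
      (L1 :: L2 :: rest).length = d ∧
      IsSortingNet (L1 :: L2 :: rest) ∧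
      Saturated L1 L2 := by
  classical
  obtain ⟨C, hClen, hCsort⟩ := h
  rcases C with _ | ⟨A, _ | ⟨B, rest0⟩⟩
  · simp at hClen; omega
  · simp at hClen; omega
  have hex : ∃ k, ∃ (L1 L2 : Layer n) (rest : Net n),
      (L1 :: L2 :: rest).length = d ∧ IsSortingNet (L1 :: L2 :: rest) ∧
      (outputs [L1, L2]).ncard * (2 * n + 1) + (L1.card + L2.card) = k :=
    ⟨_, A, B, rest0, hClen, hCsort, rfl⟩
  obtain ⟨L1, L2, rest, hlen, hsort, hkeq⟩ := Nat.find_spec hex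
  have hL1 : IsLayer L1 := hsort.1 L1 (by simp)
  have hL2 : IsLayer L2 := hsort.1 L2 (by simp)
  refine ⟨L1, L2, rest, hlen, hsort, ?_, ?_⟩
  · -- not redundant
    rintro ⟨π, hcase⟩
    rcases hcase with ⟨c, hc, heq⟩ | ⟨c, hc, heq⟩
    · have hL1' : IsLayer (L1.erase c) := hL1.subset (Finset.erase_subset _ _)
      obtain ⟨rest', hlen', hsort'⟩ := replace_prefix hsort hL1' hL2 heq.subset
      have hN : (outputs [L1.erase c, L2]).ncard = (outputs [L1, L2]).ncard := by
        rw [heq, ncard_permSet]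
      have hlt : (outputs [L1.erase c, L2]).ncard * (2 * n + 1)
          + ((L1.erase c).card + L2.card) < Nat.find hex := by
        rw [hN, ← hkeq]
        exact Nat.add_lt_add_left
          (Nat.add_lt_add_right (Finset.card_erase_lt_of_mem hc) L2.card) _
      exact Nat.find_min hex hlt ⟨L1.erase c, L2, rest',
        by simp only [List.length_cons, hlen']; simpa using hlen, hsort', rfl⟩
    · have hL2' : IsLayer (L2.erase c) := hL2.subset (Finset.erase_subset _ _)
      obtain ⟨rest', hlen', hsort'⟩ := replace_prefix hsort hL1 hL2' heq.subset
      have hN : (outputs [L1, L2.erase c]).ncard = (outputs [L1, L2]).ncard := by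
        rw [heq, ncard_permSet]
      have hlt : (outputs [L1, L2.erase c]).ncard * (2 * n + 1)
          + (L1.card + (L2.erase c).card) < Nat.find hex := by
        rw [hN, ← hkeq]
        exact Nat.add_lt_add_left
          (Nat.add_lt_add_left (Finset.card_erase_lt_of_mem hc) L1.card) _
      exact Nat.find_min hex hlt ⟨L1, L2.erase c, rest',
        by simp only [List.length_cons, hlen']; simpa using hlen, hsort', rfl⟩
  · -- saturation: no useful comparator can be added
    rintro ⟨c, π, hc12, hu1, hu2, hss⟩
    have hL2' : IsLayer (insert c L2) := by
      constructor
      · intro c' hc'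
        rcases Finset.mem_insert.mp hc' with rfl | hc'
        · exact hc12
        · exact hL2.1 c' hc'
      · intro c1 h1 c2 h2 hne
        have H : ∀ u : Comp n, u ∈ L2 →
            c.1 ≠ u.1 ∧ c.1 ≠ u.2 ∧ c.2 ≠ u.1 ∧ c.2 ≠ u.2 := fun u hu =>
          ⟨fun h => hu1 ⟨u, hu, Or.inl h.symm⟩, fun h => hu1 ⟨u, hu, Or.inr h.symm⟩,
           fun h => hu2 ⟨u, hu, Or.inl h.symm⟩, fun h => hu2 ⟨u, hu, Or.inr h.symm⟩⟩
        rcases Finset.mem_insert.mp h1 with e1 | m1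
        · rcases Finset.mem_insert.mp h2 with e2 | m2
          · exact absurd (e1.trans e2.symm) hne
          · rw [e1]; exact H c2 m2
        · rcases Finset.mem_insert.mp h2 with e2 | m2
          · obtain ⟨q1, q2, q3, q4⟩ := H c1 m1
            rw [e2]
            exact ⟨q1.symm, q3.symm, q2.symm, q4.symm⟩
          · exact hL2.2 c1 m1 c2 m2 hne
    obtain ⟨rest', hlen', hsort'⟩ := replace_prefix hsort hL1 hL2' hss.subset
    have hNlt : (outputs [L1, insert c L2]).ncard + 1 ≤ (outputs [L1, L2]).ncard := by
      have hfin : (permSet π (outputs [L1, L2])).Finite :=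
        Set.Finite.image _ (Set.finite_range _)
      have := Set.ncard_lt_ncard hss hfin
      rw [ncard_permSet] at this
      omega
    have hcard1 : L1.card ≤ n := hL1.card_le
    have hcard2 : (insert c L2).card ≤ n := hL2'.card_le
    have hlt : (outputs [L1, insert c L2]).ncard * (2 * n + 1)
        + (L1.card + (insert c L2).card) < Nat.find hex := by
      rw [← hkeq]
      calc (outputs [L1, insert c L2]).ncard * (2 * n + 1)
            + (L1.card + (insert c L2).card)
          ≤ (outputs [L1, insert c L2]).ncard * (2 * n + 1) + 2 * n :=
            Nat.add_le_add_left (by omega) _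
        _ < (outputs [L1, insert c L2]).ncard * (2 * n + 1) + (2 * n + 1) :=
            Nat.add_lt_add_left (by omega) _
        _ = ((outputs [L1, insert c L2]).ncard + 1) * (2 * n + 1) := by ring
        _ ≤ (outputs [L1, L2]).ncard * (2 * n + 1) :=
            Nat.mul_le_mul_right _ hNlt
        _ ≤ (outputs [L1, L2]).ncard * (2 * n + 1) + (L1.card + L2.card) :=
            Nat.le_add_right _ _
    exact Nat.find_min hex hlt ⟨L1, insert c L2, rest',
      by simp only [List.length_cons, hlen']; simpa using hlen, hsort', rfl⟩

end SN
end

section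
/- Let C be a comparator network on n channels of depth k, and let d ≥ k. There exists a comparator network D such that C;D is a sorting network on n channels of depth d if and only if there exists a comparator network D' such that C^R;D' is a sorting network on n channels of depth d. -/
namespace SN

open scoped Classical

/-! ### Auxiliary lemmas for reflection -/

lemma reflectComp_reflectComp {n : ℕ} (c : Comp n) :
    reflectComp (reflectComp c) = c := by
  simp [reflectComp, Fin.rev_rev]

lemma reflectLayer_reflectLayer {n : ℕ} (L : Layer n) :
    reflectLayer (reflectLayer L) = L := by
  rw [reflectLayer, reflectLayer, Finset.image_image]
  have : (reflectComp ∘ reflectComp : Comp n → Comp n) = id := by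
    funext c; exact reflectComp_reflectComp c
  rw [this, Finset.image_id]

lemma reflect_reflect {n : ℕ} (C : Net n) : reflect (reflect C) = C := by
  rw [reflect, reflect, List.map_map]
  have : (reflectLayer ∘ reflectLayer : Layer n → Layer n) = id := by
    funext L; exact reflectLayer_reflectLayer L
  rw [this, List.map_id]

lemma isLayer_reflectLayer {n : ℕ} {L : Layer n} (hL : IsLayer L) :
    IsLayer (reflectLayer L) := by
  obtain ⟨h1, h2⟩ := hL
  constructor
  · intro c hc
    simp only [reflectLayer, Finset.mem_image] at hc
    obtain ⟨c', hc', rfl⟩ := hc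
    exact Fin.rev_lt_rev.mpr (h1 c' hc')
  · intro c hc d hd hne
    simp only [reflectLayer, Finset.mem_image] at hc hd
    obtain ⟨c', hc', rfl⟩ := hc
    obtain ⟨d', hd', rfl⟩ := hd
    have hne' : c' ≠ d' := by rintro rfl; exact hne rfl
    obtain ⟨a, b, e, f⟩ := h2 c' hc' d' hd' hne'
    refine ⟨?_, ?_, ?_, ?_⟩ <;>
      simp only [reflectComp, ne_eq, Fin.rev_inj] <;> tauto

lemma isNet_reflect {n : ℕ} {C : Net n} (hC : IsNet C) : IsNet (reflect C) := by
  intro L hL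
  simp only [reflect, List.mem_map] at hL
  obtain ⟨L', hL', rfl⟩ := hL
  exact isLayer_reflectLayer (hC L' hL')

/-- The duality transform: negate and reverse channels. -/
def dualT {n : ℕ} (x : Fin n → Bool) : Fin n → Bool := fun i => !(x i.rev)

lemma dualT_dualT {n : ℕ} (x : Fin n → Bool) : dualT (dualT x) = x := by
  funext i; simp [dualT, Fin.rev_rev]

lemma eq_of_fst_eq {n : ℕ} {L : Layer n} (hL : IsLayer L) {c c' : Comp n}
    (hc : c ∈ L) (hc' : c' ∈ L) (h : c.1 = c'.1) : c = c' := by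
  by_contra hne
  exact (hL.2 c hc c' hc' hne).1 h

lemma eq_of_snd_eq {n : ℕ} {L : Layer n} (hL : IsLayer L) {c c' : Comp n}
    (hc : c ∈ L) (hc' : c' ∈ L) (h : c.2 = c'.2) : c = c' := by
  by_contra hne
  exact (hL.2 c hc c' hc' hne).2.2.2 h

lemma applyLayer_min {n : ℕ} {L : Layer n} (hL : IsLayer L) {c : Comp n}
    (hc : c ∈ L) (x : Fin n → Bool) :
    applyLayer L x c.1 = (x c.1 && x c.2) := by
  have h1 : ∃ c' ∈ L, c'.1 = c.1 := ⟨c, hc, rfl⟩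
  have hch : h1.choose = c :=
    eq_of_fst_eq hL h1.choose_spec.1 hc h1.choose_spec.2
  simp only [applyLayer, dif_pos h1, hch]

lemma applyLayer_max {n : ℕ} {L : Layer n} (hL : IsLayer L) {c : Comp n}
    (hc : c ∈ L) (x : Fin n → Bool) :
    applyLayer L x c.2 = (x c.1 || x c.2) := by
  have h1 : ¬ ∃ c' ∈ L, c'.1 = c.2 := by
    rintro ⟨c', hc', h⟩
    by_cases he : c' = c
    · subst he
      exact absurd h (ne_of_lt (hL.1 c' hc'))
    · exact (hL.2 c' hc' c hc he).2.1 h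
  have h2 : ∃ c' ∈ L, c'.2 = c.2 := ⟨c, hc, rfl⟩
  have hch : h2.choose = c :=
    eq_of_snd_eq hL h2.choose_spec.1 hc h2.choose_spec.2
  simp only [applyLayer, dif_neg h1, dif_pos h2, hch]

lemma applyLayer_unused {n : ℕ} {L : Layer n} {k : Fin n}
    (h : ¬ usedIn L k) (x : Fin n → Bool) : applyLayer L x k = x k := by
  have h1 : ¬ ∃ c ∈ L, c.1 = k := by
    rintro ⟨c, hc, hk⟩; exact h ⟨c, hc, Or.inl hk⟩
  have h2 : ¬ ∃ c ∈ L, c.2 = k := by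
    rintro ⟨c, hc, hk⟩; exact h ⟨c, hc, Or.inr hk⟩
  simp only [applyLayer, dif_neg h1, dif_neg h2]

lemma mem_reflectLayer {n : ℕ} {L : Layer n} {c : Comp n} (hc : c ∈ L) :
    reflectComp c ∈ reflectLayer L :=
  Finset.mem_image_of_mem _ hc

lemma applyLayer_reflect {n : ℕ} {L : Layer n} (hL : IsLayer L)
    (x : Fin n → Bool) :
    applyLayer (reflectLayer L) (dualT x) = dualT (applyLayer L x) := by
  have hL' : IsLayer (reflectLayer L) := isLayer_reflectLayer hL
  funext i
  by_cases hu : usedIn L i.rev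
  · obtain ⟨c, hc, hck⟩ := hu
    rcases hck with hck | hck
    · -- i.rev is a min channel of c; i is the max channel of reflectComp c
      have hi : (reflectComp c).2 = i := by
        simp [reflectComp, hck, Fin.rev_rev]
      rw [← hi, applyLayer_max hL' (mem_reflectLayer hc)]
      have : dualT (applyLayer L x) (reflectComp c).2 = !(applyLayer L x c.1) := by
        simp [dualT, reflectComp, Fin.rev_rev]
      rw [this, applyLayer_min hL hc]
      simp [dualT, reflectComp, Fin.rev_rev, Bool.not_and, Bool.or_comm]
    · -- i.rev is a max channel of c; i is the min channel of reflectComp c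
      have hi : (reflectComp c).1 = i := by
        simp [reflectComp, hck, Fin.rev_rev]
      rw [← hi, applyLayer_min hL' (mem_reflectLayer hc)]
      have : dualT (applyLayer L x) (reflectComp c).1 = !(applyLayer L x c.2) := by
        simp [dualT, reflectComp, Fin.rev_rev]
      rw [this, applyLayer_max hL hc]
      simp [dualT, reflectComp, Fin.rev_rev, Bool.not_or, Bool.and_comm]
  · have hu' : ¬ usedIn (reflectLayer L) i := by
      rintro ⟨d, hd, hdk⟩
      simp only [reflectLayer, Finset.mem_image] at hd
      obtain ⟨c, hc, rfl⟩ := hd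
      rcases hdk with h | h
      · exact hu ⟨c, hc, Or.inr (by
          simpa [reflectComp, Fin.rev_inj] using congrArg Fin.rev h)⟩
      · exact hu ⟨c, hc, Or.inl (by
          simpa [reflectComp, Fin.rev_inj] using congrArg Fin.rev h)⟩
    rw [applyLayer_unused hu']
    simp [dualT, applyLayer_unused hu]

lemma run_reflect {n : ℕ} {C : Net n} (hC : IsNet C) (x : Fin n → Bool) :
    run (reflect C) (dualT x) = dualT (run C x) := by
  induction C generalizing x with
  | nil => simp [run, reflect]
  | cons L C ih =>
    have hL : IsLayer L := hC L List.mem_cons_self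
    have hC' : IsNet C := fun M hM => hC M (List.mem_cons_of_mem L hM)
    show run (reflectLayer L :: reflect C) (dualT x) = _
    rw [run, List.foldl_cons]
    show run (reflect C) (applyLayer (reflectLayer L) (dualT x)) = _
    rw [applyLayer_reflect hL, ih hC']
    rfl

lemma bsorted_dualT {n : ℕ} {x : Fin n → Bool} (hx : BSorted x) :
    BSorted (dualT x) := by
  intro i j hij
  have : x j.rev ≤ x i.rev := hx j.rev i.rev (Fin.rev_le_rev.mpr hij)
  simp only [dualT]
  revert this
  cases x i.rev <;> cases x j.rev <;> simp

lemma isSortingNet_reflect {n : ℕ} {C : Net n} (h : IsSortingNet C) :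
    IsSortingNet (reflect C) := by
  obtain ⟨hnet, hsort⟩ := h
  refine ⟨isNet_reflect hnet, fun x => ?_⟩
  have hx : x = dualT (dualT x) := (dualT_dualT x).symm
  rw [hx, run_reflect hnet]
  exact bsorted_dualT (hsort (dualT x))

lemma reflect_append {n : ℕ} (C D : Net n) :
    reflect (C ++ D) = reflect C ++ reflect D := List.map_append

lemma reflect_length {n : ℕ} (C : Net n) : (reflect C).length = C.length :=
  List.length_map _

/-- `C` extends to a sorting network of depth d iff its
reflection `C^R` does. -/
theorem reflection_extends {n k d : ℕ} (C : Net n) (hC : IsNet C)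
    (hk : C.length = k) (hkd : k ≤ d) :
    (∃ D : Net n, (C ++ D).length = d ∧ IsSortingNet (C ++ D)) ↔
    (∃ D' : Net n, (reflect C ++ D').length = d ∧
      IsSortingNet (reflect C ++ D')) := by
  constructor
  · rintro ⟨D, hlen, hsort⟩
    refine ⟨reflect D, ?_, ?_⟩
    · simpa [reflect_length] using hlen
    · rw [← reflect_append]
      exact isSortingNet_reflect hsort
  · rintro ⟨D', hlen, hsort⟩
    refine ⟨reflect D', ?_, ?_⟩
    · simpa [reflect_length] using hlen
    · have := isSortingNet_reflect hsort
      rwa [reflect_append, reflect_reflect] at this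

end SN
end
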